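/- Let ω : ℤ\{0} → ℝ with ω(n) = sqrt(|n|). Suppose a quadratic monomial vector field coefficient q (indexed by signs σ, σ1, σ2 ∈ {±1} and nonzero integers j, j1, j2 with σ j = σ1 j1 + σ2 j2) satisfies the homological equation q·i(σ ω(j) − σ1 ω(j1) − σ2 ω(j2)) + r = 0 for a given r ∈ ℂ. Then q is uniquely determined: q = −r / (i(σ ω(j) − σ1 ω(j1) − σ2 ω(j2))), and the denominator is nonzero; moreover |q| ≤ |r|·(2+√2)/2. -/

import Mathlib

/-- The cubic small divisor `σ ω(j) − σ1 ω(j1) − σ2 ω(j2)` with `ω(n) = √|n|`. -/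
noncomputable def cubicDiv (σ σ1 σ2 j j1 j2 : ℤ) : ℝ :=
  (σ : ℝ) * Real.sqrt |(j : ℝ)| - (σ1 : ℝ) * Real.sqrt |(j1 : ℝ)|
    - (σ2 : ℝ) * Real.sqrt |(j2 : ℝ)|

lemma hardCase (b c : ℝ) (hb : 1 ≤ b) (hc : 1 ≤ c) :
    2 - Real.sqrt 2 ≤ Real.sqrt b + Real.sqrt c - Real.sqrt (b + c) := by
  have hb0 : (0:ℝ) ≤ b := by linarith
  have hc0 : (0:ℝ) ≤ c := by linarith
  set p := Real.sqrt b * Real.sqrt c with hp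
  have hp1 : 1 ≤ p := by
    have := Real.one_le_sqrt.2 hb
    have := Real.one_le_sqrt.2 hc
    nlinarith
  have hpsq : p ^ 2 = b * c := by
    rw [hp]; rw [mul_pow, Real.sq_sqrt hb0, Real.sq_sqrt hc0]
  set s := Real.sqrt b + Real.sqrt c with hs
  set u := Real.sqrt (b + c) with hu
  have hsb : 1 ≤ Real.sqrt b := Real.one_le_sqrt.2 hb
  have hsc : 1 ≤ Real.sqrt c := Real.one_le_sqrt.2 hc
  have hs2p : s ≤ 2 * p := by
    have h1 : Real.sqrt b ≤ p := by nlinarith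
    have h2 : Real.sqrt c ≤ p := by nlinarith
    simp only [hs]; linarith
  have husq : u ^ 2 = b + c := Real.sq_sqrt (by linarith)
  have hu2p : u ≤ Real.sqrt 2 * p := by
    have h1 : b + c ≤ 2 * (b * c) := by nlinarith
    have h2 : Real.sqrt (b + c) ≤ Real.sqrt (2 * (b * c)) := Real.sqrt_le_sqrt h1
    have h3 : Real.sqrt (2 * (b * c)) = Real.sqrt 2 * p := by
      rw [Real.sqrt_mul (by norm_num), hp, ← Real.sqrt_mul hb0]
    rw [hu]; rw [h3] at h2; exact h2
  have hdiff : (s - u) * (s + u) = 2 * p := by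
    have : s ^ 2 = b + c + 2 * p := by
      simp only [hs]; nlinarith [Real.sq_sqrt hb0, Real.sq_sqrt hc0]
    nlinarith
  have hsu : 0 ≤ s - u := by
    nlinarith [Real.sqrt_nonneg b, Real.sqrt_nonneg c, Real.sqrt_nonneg (b+c)]
  have hsqrt2 : Real.sqrt 2 ^ 2 = 2 := Real.sq_sqrt (by norm_num)
  have hsqrt2pos : 0 < Real.sqrt 2 := Real.sqrt_pos.2 (by norm_num)
  nlinarith [mul_le_mul_of_nonneg_left (by nlinarith : s + u ≤ (2 + Real.sqrt 2) * p) hsu,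
    mul_pos (by nlinarith : (0:ℝ) < 2 + Real.sqrt 2) (by nlinarith : (0:ℝ) < p)]

lemma keyIneq (b c e1 e2 : ℝ) (hb : 1 ≤ b) (hc : 1 ≤ c)
    (he1 : e1 = 1 ∨ e1 = -1) (he2 : e2 = 1 ∨ e2 = -1) :
    2 - Real.sqrt 2 ≤ |Real.sqrt (b + c) + e1 * Real.sqrt b + e2 * Real.sqrt c| := by
  have hsb : 1 ≤ Real.sqrt b := Real.one_le_sqrt.2 hb
  have hsc : 1 ≤ Real.sqrt c := Real.one_le_sqrt.2 hc
  have hs21 : 1 ≤ Real.sqrt 2 := Real.one_le_sqrt.2 (by norm_num)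
  have hs2 : Real.sqrt 2 ≤ 2 := by
    have h4 : Real.sqrt 4 = 2 := by
      rw [show (4:ℝ) = 2^2 by norm_num]; exact Real.sqrt_sq (by norm_num)
    have := Real.sqrt_le_sqrt (show (2:ℝ) ≤ 4 by norm_num)
    linarith
  have hbc_b : Real.sqrt b ≤ Real.sqrt (b + c) := Real.sqrt_le_sqrt (by linarith)
  have hbc_c : Real.sqrt c ≤ Real.sqrt (b + c) := Real.sqrt_le_sqrt (by linarith)
  rcases he1 with rfl | rfl <;> rcases he2 with rfl | rfl
  · rw [abs_of_nonneg (by nlinarith)]; nlinarith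
  · rw [abs_of_nonneg (by nlinarith)]; nlinarith
  · rw [abs_of_nonneg (by nlinarith)]; nlinarith
  · have h := hardCase b c hb hc
    rw [abs_of_nonpos (by nlinarith)]; nlinarith

lemma signMul {x y : ℝ} (hx : x = 1 ∨ x = -1) (hy : y = 1 ∨ y = -1) :
    x * y = 1 ∨ x * y = -1 := by
  rcases hx with rfl | rfl <;> rcases hy with rfl | rfl <;> norm_num

lemma keyAbs (b c e e1 e2 : ℝ) (hb : 1 ≤ b) (hc : 1 ≤ c)
    (he : e = 1 ∨ e = -1) (he1 : e1 = 1 ∨ e1 = -1) (he2 : e2 = 1 ∨ e2 = -1) :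
    2 - Real.sqrt 2 ≤ |e * Real.sqrt (b + c) + e1 * Real.sqrt b + e2 * Real.sqrt c| := by
  have h := keyIneq b c (e * e1) (e * e2) hb hc (signMul he he1) (signMul he he2)
  have heq : |e * Real.sqrt (b + c) + e1 * Real.sqrt b + e2 * Real.sqrt c|
      = |Real.sqrt (b + c) + e * e1 * Real.sqrt b + e * e2 * Real.sqrt c| := by
    rcases he with rfl | rfl
    · congr 1; ring
    · rw [← abs_neg]; congr 1; ring
  rw [heq]; exact h

lemma keyMain (a b c e e1 e2 : ℝ) (ha : 1 ≤ a) (hb : 1 ≤ b) (hc : 1 ≤ c)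
    (hsum : a = b + c ∨ b = a + c ∨ c = a + b)
    (he : e = 1 ∨ e = -1) (he1 : e1 = 1 ∨ e1 = -1) (he2 : e2 = 1 ∨ e2 = -1) :
    2 - Real.sqrt 2 ≤ |e * Real.sqrt a + e1 * Real.sqrt b + e2 * Real.sqrt c| := by
  rcases hsum with rfl | rfl | rfl
  · exact keyAbs b c e e1 e2 hb hc he he1 he2
  · have h := keyAbs a c e1 e e2 ha hc he1 he he2
    calc 2 - Real.sqrt 2 ≤ |e1 * Real.sqrt (a + c) + e * Real.sqrt a + e2 * Real.sqrt c| := h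
      _ = |e * Real.sqrt a + e1 * Real.sqrt (a + c) + e2 * Real.sqrt c| := by congr 1; ring
  · have h := keyAbs a b e2 e e1 ha hb he2 he he1
    calc 2 - Real.sqrt 2 ≤ |e2 * Real.sqrt (a + b) + e * Real.sqrt a + e1 * Real.sqrt b| := h
      _ = |e * Real.sqrt a + e1 * Real.sqrt b + e2 * Real.sqrt (a + b)| := by congr 1; ring

lemma intSum (σ σ1 σ2 : ℤ) (hσ : σ = 1 ∨ σ = -1) (hσ1 : σ1 = 1 ∨ σ1 = -1)
    (hσ2 : σ2 = 1 ∨ σ2 = -1) (j j1 j2 : ℤ)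
    (hmom : σ * j = σ1 * j1 + σ2 * j2) :
    |j| = |j1| + |j2| ∨ |j1| = |j| + |j2| ∨ |j2| = |j| + |j1| := by
  rcases hσ with rfl | rfl <;> rcases hσ1 with rfl | rfl <;> rcases hσ2 with rfl | rfl <;>
    simp only [Int.abs_eq_natAbs] <;> omega

lemma divBound (σ σ1 σ2 : ℤ) (hσ : σ = 1 ∨ σ = -1) (hσ1 : σ1 = 1 ∨ σ1 = -1)
    (hσ2 : σ2 = 1 ∨ σ2 = -1) (j j1 j2 : ℤ) (hj : j ≠ 0) (hj1 : j1 ≠ 0) (hj2 : j2 ≠ 0)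
    (hmom : σ * j = σ1 * j1 + σ2 * j2) :
    2 - Real.sqrt 2 ≤ |cubicDiv σ σ1 σ2 j j1 j2| := by
  have ha : (1:ℝ) ≤ |(j : ℝ)| := by
    rw [← Int.cast_abs]; exact_mod_cast Int.one_le_abs hj
  have hb : (1:ℝ) ≤ |(j1 : ℝ)| := by
    rw [← Int.cast_abs]; exact_mod_cast Int.one_le_abs hj1
  have hc : (1:ℝ) ≤ |(j2 : ℝ)| := by
    rw [← Int.cast_abs]; exact_mod_cast Int.one_le_abs hj2
  have hsumZ := intSum σ σ1 σ2 hσ hσ1 hσ2 j j1 j2 hmom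
  have hsum : |(j:ℝ)| = |(j1:ℝ)| + |(j2:ℝ)| ∨ |(j1:ℝ)| = |(j:ℝ)| + |(j2:ℝ)|
      ∨ |(j2:ℝ)| = |(j:ℝ)| + |(j1:ℝ)| := by
    rcases hsumZ with h | h | h
    · left; rw [← Int.cast_abs, ← Int.cast_abs, ← Int.cast_abs]; exact_mod_cast h
    · right; left; rw [← Int.cast_abs, ← Int.cast_abs, ← Int.cast_abs]; exact_mod_cast h
    · right; right; rw [← Int.cast_abs, ← Int.cast_abs, ← Int.cast_abs]; exact_mod_cast h
  have he : (σ:ℝ) = 1 ∨ (σ:ℝ) = -1 := by rcases hσ with rfl | rfl <;> simp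
  have he1 : (-(σ1:ℝ)) = 1 ∨ (-(σ1:ℝ)) = -1 := by rcases hσ1 with rfl | rfl <;> simp
  have he2 : (-(σ2:ℝ)) = 1 ∨ (-(σ2:ℝ)) = -1 := by rcases hσ2 with rfl | rfl <;> simp
  have h := keyMain |(j:ℝ)| |(j1:ℝ)| |(j2:ℝ)| (σ:ℝ) (-(σ1:ℝ)) (-(σ2:ℝ)) ha hb hc hsum he he1 he2
  have heqabs : abs ((σ:ℝ) * Real.sqrt |(j:ℝ)| + (-(σ1:ℝ)) * Real.sqrt |(j1:ℝ)|
      + (-(σ2:ℝ)) * Real.sqrt |(j2:ℝ)|) = |cubicDiv σ σ1 σ2 j j1 j2| := by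
    unfold cubicDiv; congr 1; ring
  rw [← heqabs]; exact h

theorem stmt12 (σ σ1 σ2 : ℤ) (hσ : σ = 1 ∨ σ = -1) (hσ1 : σ1 = 1 ∨ σ1 = -1)
    (hσ2 : σ2 = 1 ∨ σ2 = -1)
    (j j1 j2 : ℤ) (hj : j ≠ 0) (hj1 : j1 ≠ 0) (hj2 : j2 ≠ 0)
    (hmom : σ * j = σ1 * j1 + σ2 * j2) (q r : ℂ)
    (heq : q * (Complex.I * (cubicDiv σ σ1 σ2 j j1 j2 : ℂ)) + r = 0) :
    cubicDiv σ σ1 σ2 j j1 j2 ≠ 0 ∧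
    q = -r / (Complex.I * (cubicDiv σ σ1 σ2 j j1 j2 : ℂ)) ∧
    ‖q‖ ≤ ‖r‖ * (2 + Real.sqrt 2) / 2 := by
  set D := cubicDiv σ σ1 σ2 j j1 j2 with hD
  have hbound := divBound σ σ1 σ2 hσ hσ1 hσ2 j j1 j2 hj hj1 hj2 hmom
  have hsqrt2 : Real.sqrt 2 ^ 2 = 2 := Real.sq_sqrt (by norm_num)
  have hs2lt : Real.sqrt 2 < 2 := by nlinarith [Real.sqrt_nonneg 2]
  have hpos : (0:ℝ) < 2 - Real.sqrt 2 := by linarith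
  have hDne : D ≠ 0 := by
    intro h0
    have hb2 : 2 - Real.sqrt 2 ≤ |D| := hbound
    rw [h0] at hb2; simp at hb2
  have hden : Complex.I * (D : ℂ) ≠ 0 := by
    apply mul_ne_zero Complex.I_ne_zero
    exact_mod_cast Complex.ofReal_ne_zero.2 hDne
  have hq : q = -r / (Complex.I * (D : ℂ)) := by
    rw [eq_div_iff hden]
    linear_combination heq
  refine ⟨hDne, hq, ?_⟩
  have hnorm : ‖q‖ = ‖r‖ / |D| := by
    rw [hq, norm_div, norm_neg, norm_mul, Complex.norm_I,
      one_mul, Complex.norm_real, Real.norm_eq_abs]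
  have hbD : 2 - Real.sqrt 2 ≤ |D| := hbound
  rw [hnorm]
  have h1 : ‖r‖ / |D| ≤ ‖r‖ / (2 - Real.sqrt 2) :=
    div_le_div_of_nonneg_left (norm_nonneg r) hpos hbD
  have h2 : ‖r‖ / (2 - Real.sqrt 2) = ‖r‖ * (2 + Real.sqrt 2) / 2 := by
    rw [div_eq_div_iff (by linarith) (by norm_num)]
    linear_combination ‖r‖ * hsqrt2
  linarith [h1, h2.le, h2.ge]
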